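/- Let r = (x,y) ∈ ℝ² ≅ ℂ and s = (x',y') ∈ ℝ² ≅ ℂ, and a = (a,b) ∈ ℤ² ≅ ℤ[i] with (a,b) ≠ (0,0). The set of s such that for all four maps γ^{(i)} (i = 1..4) one has γ_s^{(i)}(a) = γ_r^{(i)}(a) is the intersection of 4 half-open axis-aligned squares of side length 1/|a|, and in particular this set is convex. -/

import Mathlib

/-- Gaussian SRS map: `γ_r(a) = -⌊r·a⌋`, identifying `ℂ ≅ ℝ × ℝ` and `ℤ[i] ≅ ℤ × ℤ`. -/
noncomputable def gsrs (r : ℝ × ℝ) (a : ℤ × ℤ) : ℤ × ℤ :=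
  (-⌊r.1 * (a.1 : ℝ) - r.2 * (a.2 : ℝ)⌋, -⌊r.1 * (a.2 : ℝ) + r.2 * (a.1 : ℝ)⌋)

/-- Componentwise conjugation on `ℤ[i] ≅ ℤ × ℤ`. -/
def zconj (a : ℤ × ℤ) : ℤ × ℤ := (a.1, -a.2)

/-- The four variants of the map `γ_r`. -/
noncomputable def gsrsVar : Fin 4 → (ℝ × ℝ) → (ℤ × ℤ) → (ℤ × ℤ)
  | 0 => fun r a => gsrs r a
  | 1 => fun r a => -(gsrs r (-a))
  | 2 => fun r a => zconj (gsrs r (zconj a))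
  | 3 => fun r a => -(zconj (gsrs r (-(zconj a))))

/-- Dot product on `ℝ × ℝ`. -/
def dot (p q : ℝ × ℝ) : ℝ := p.1 * q.1 + p.2 * q.2

/-- A (possibly rotated) half-open square of side length `l` in `ℝ × ℝ`. -/
def IsHalfOpenSquare (S : Set (ℝ × ℝ)) (l : ℝ) : Prop :=
  ∃ c u v : ℝ × ℝ, dot u v = 0 ∧ dot u u = 1 ∧ dot v v = 1 ∧
    S = {p | 0 ≤ dot (p - c) u ∧ dot (p - c) u < l ∧
             0 ≤ dot (p - c) v ∧ dot (p - c) v < l}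

lemma sq_convex {S : Set (ℝ × ℝ)} {l : ℝ} (h : IsHalfOpenSquare S l) : Convex ℝ S := by
  obtain ⟨c, u, v, -, -, -, rfl⟩ := h
  have key : ∀ (w p q : ℝ × ℝ) (t1 t2 : ℝ), t1 + t2 = 1 →
      dot (t1 • p + t2 • q - c) w = t1 * dot (p - c) w + t2 * dot (q - c) w := by
    intro w p q t1 t2 ht
    simp only [dot, Prod.fst_add, Prod.snd_add, Prod.fst_sub, Prod.snd_sub, Prod.smul_fst,
      Prod.smul_snd, smul_eq_mul]
    linear_combination (c.1 * w.1 + c.2 * w.2) * ht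
  intro p hp q hq t1 t2 ht1 ht2 hsum
  obtain ⟨hp1, hp2, hp3, hp4⟩ := hp
  obtain ⟨hq1, hq2, hq3, hq4⟩ := hq
  simp only [Set.mem_setOf_eq, key _ _ _ _ _ hsum]
  refine ⟨by positivity, ?_, by positivity, ?_⟩ <;>
  · rcases eq_or_lt_of_le ht1 with h | h
    · have h2 : t2 = 1 := by linarith
      rw [← h, h2]; simpa using (by assumption)
    · nlinarith

lemma sq_floor (w₁ w₂ : ℝ × ℝ) (N : ℝ) (hN : 0 < N) (h12 : dot w₁ w₂ = 0)
    (h1 : dot w₁ w₁ = N) (h2 : dot w₂ w₂ = N) (m₁ m₂ : ℤ) :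
    IsHalfOpenSquare {s : ℝ × ℝ | ⌊dot s w₁⌋ = m₁ ∧ ⌊dot s w₂⌋ = m₂} (1 / Real.sqrt N) := by
  set n := Real.sqrt N with hn
  have hnpos : 0 < n := Real.sqrt_pos.mpr hN
  have hn2 : n * n = N := Real.mul_self_sqrt hN.le
  set c : ℝ × ℝ := ((m₁ : ℝ)/N) • w₁ + ((m₂ : ℝ)/N) • w₂ with hc
  refine ⟨c, (1/n) • w₁, (1/n) • w₂, ?_, ?_, ?_, ?_⟩
  · simp only [dot, Prod.smul_fst, Prod.smul_snd, smul_eq_mul] at *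
    field_simp
    linear_combination h12
  · simp only [dot, Prod.smul_fst, Prod.smul_snd, smul_eq_mul] at *
    field_simp
    linear_combination h1 - hn2
  · simp only [dot, Prod.smul_fst, Prod.smul_snd, smul_eq_mul] at *
    field_simp
    linear_combination h2 - hn2
  · ext p
    have key1 : dot (p - c) ((1/n) • w₁) = (dot p w₁ - m₁) / n := by
      simp only [dot, hc, Prod.fst_add, Prod.snd_add, Prod.fst_sub, Prod.snd_sub,
        Prod.smul_fst, Prod.smul_snd, smul_eq_mul] at *
      field_simp
      linear_combination (-((m₁:ℝ))) * h1 + (-((m₂:ℝ))) * h12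
    have key2 : dot (p - c) ((1/n) • w₂) = (dot p w₂ - m₂) / n := by
      simp only [dot, hc, Prod.fst_add, Prod.snd_add, Prod.fst_sub, Prod.snd_sub,
        Prod.smul_fst, Prod.smul_snd, smul_eq_mul] at *
      field_simp
      linear_combination (-((m₂:ℝ))) * h2 + (-((m₁:ℝ))) * h12
    simp only [Set.mem_setOf_eq, key1, key2, Int.floor_eq_iff, div_nonneg_iff,
      div_lt_div_iff₀ hnpos hnpos]
    constructor
    · rintro ⟨⟨a1, a2⟩, ⟨b1, b2⟩⟩
      refine ⟨Or.inl ⟨by linarith, hnpos.le⟩, by nlinarith, Or.inl ⟨by linarith, hnpos.le⟩,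
        by nlinarith⟩
    · rintro ⟨a1, a2, b1, b2⟩
      rcases a1 with ⟨a1, -⟩ | ⟨-, hle⟩
      · rcases b1 with ⟨b1, -⟩ | ⟨-, hle⟩
        · exact ⟨⟨by linarith, by nlinarith⟩, ⟨by linarith, by nlinarith⟩⟩
        · linarith
      · linarith

theorem witness_set_is_intersection_of_squares (r : ℝ × ℝ) (a : ℤ × ℤ)
    (ha : a ≠ (0, 0)) :
    ∃ S₁ S₂ S₃ S₄ : Set (ℝ × ℝ),
      IsHalfOpenSquare S₁ (1 / Real.sqrt ((a.1 : ℝ)^2 + (a.2 : ℝ)^2)) ∧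
      IsHalfOpenSquare S₂ (1 / Real.sqrt ((a.1 : ℝ)^2 + (a.2 : ℝ)^2)) ∧
      IsHalfOpenSquare S₃ (1 / Real.sqrt ((a.1 : ℝ)^2 + (a.2 : ℝ)^2)) ∧
      IsHalfOpenSquare S₄ (1 / Real.sqrt ((a.1 : ℝ)^2 + (a.2 : ℝ)^2)) ∧
      {s : ℝ × ℝ | ∀ i : Fin 4, gsrsVar i s a = gsrsVar i r a} = S₁ ∩ S₂ ∩ S₃ ∩ S₄ ∧
      Convex ℝ {s : ℝ × ℝ | ∀ i : Fin 4, gsrsVar i s a = gsrsVar i r a} := by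
  obtain ⟨a1, a2⟩ := a
  have hN : 0 < (a1 : ℝ)^2 + (a2 : ℝ)^2 := by
    have h : a1 ≠ 0 ∨ a2 ≠ 0 := by
      by_contra hcon
      push_neg at hcon
      exact ha (by simp [hcon.1, hcon.2, Prod.ext_iff])
    rcases h with h | h
    · have : (0:ℝ) < (a1:ℝ)^2 := by positivity
      nlinarith [sq_nonneg ((a2:ℝ))]
    · have : (0:ℝ) < (a2:ℝ)^2 := by positivity
      nlinarith [sq_nonneg ((a1:ℝ))]
  set N : ℝ := (a1 : ℝ)^2 + (a2 : ℝ)^2 with hNdef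
  -- the four pairs of orthogonal vectors
  set w₁ : ℝ × ℝ := ((a1:ℝ), -(a2:ℝ))
  set w₂ : ℝ × ℝ := ((a2:ℝ), (a1:ℝ))
  set w₃ : ℝ × ℝ := (-(a1:ℝ), (a2:ℝ))
  set w₄ : ℝ × ℝ := (-(a2:ℝ), -(a1:ℝ))
  set w₅ : ℝ × ℝ := ((a1:ℝ), (a2:ℝ))
  set w₆ : ℝ × ℝ := (-(a2:ℝ), (a1:ℝ))
  set w₇ : ℝ × ℝ := (-(a1:ℝ), -(a2:ℝ))
  set w₈ : ℝ × ℝ := ((a2:ℝ), -(a1:ℝ))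
  have hsq1 := sq_floor w₁ w₂ N hN (by simp [w₁, w₂, dot]; ring) (by simp [w₁, dot]; ring)
    (by simp [w₂, dot]; ring) ⌊dot r w₁⌋ ⌊dot r w₂⌋
  have hsq2 := sq_floor w₃ w₄ N hN (by simp [w₃, w₄, dot]; ring) (by simp [w₃, dot]; ring)
    (by simp [w₄, dot]; ring) ⌊dot r w₃⌋ ⌊dot r w₄⌋
  have hsq3 := sq_floor w₅ w₆ N hN (by simp [w₅, w₆, dot]; ring) (by simp [w₅, dot]; ring)
    (by simp [w₆, dot]; ring) ⌊dot r w₅⌋ ⌊dot r w₆⌋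
  have hsq4 := sq_floor w₇ w₈ N hN (by simp [w₇, w₈, dot]; ring) (by simp [w₇, dot]; ring)
    (by simp [w₈, dot]; ring) ⌊dot r w₇⌋ ⌊dot r w₈⌋
  have hchar : ∀ s : ℝ × ℝ, (∀ i : Fin 4, gsrsVar i s (a1, a2) = gsrsVar i r (a1, a2)) ↔
      ((⌊dot s w₁⌋ = ⌊dot r w₁⌋ ∧ ⌊dot s w₂⌋ = ⌊dot r w₂⌋) ∧
       (⌊dot s w₃⌋ = ⌊dot r w₃⌋ ∧ ⌊dot s w₄⌋ = ⌊dot r w₄⌋) ∧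
       (⌊dot s w₅⌋ = ⌊dot r w₅⌋ ∧ ⌊dot s w₆⌋ = ⌊dot r w₆⌋) ∧
       (⌊dot s w₇⌋ = ⌊dot r w₇⌋ ∧ ⌊dot s w₈⌋ = ⌊dot r w₈⌋)) := by
    intro s
    constructor
    · intro h
      have h0 := h 0; have h1 := h 1; have h2 := h 2; have h3 := h 3
      simp only [gsrsVar, gsrs, zconj, dot, w₁, w₂, w₃, w₄, w₅, w₆, w₇, w₈, Prod.mk.injEq,
        Prod.ext_iff, Prod.fst_neg, Prod.snd_neg, Int.cast_neg, neg_inj, neg_neg] at h0 h1 h2 h3 ⊢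
      ring_nf at h0 h1 h2 h3 ⊢
      exact ⟨h0, h1, h2, h3⟩
    · rintro ⟨h0, h1, h2, h3⟩ i
      fin_cases i <;>
        · simp only [gsrsVar, gsrs, zconj, dot, w₁, w₂, w₃, w₄, w₅, w₆, w₇, w₈, Prod.mk.injEq,
            Prod.ext_iff, Prod.fst_neg, Prod.snd_neg, Int.cast_neg, neg_inj,
            neg_neg] at h0 h1 h2 h3 ⊢
          ring_nf at h0 h1 h2 h3 ⊢
          first | exact h0 | exact h1 | exact h2 | exact h3
  have hset : {s : ℝ × ℝ | ∀ i : Fin 4, gsrsVar i s (a1, a2) = gsrsVar i r (a1, a2)} =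
      {s : ℝ × ℝ | ⌊dot s w₁⌋ = ⌊dot r w₁⌋ ∧ ⌊dot s w₂⌋ = ⌊dot r w₂⌋} ∩
      {s : ℝ × ℝ | ⌊dot s w₃⌋ = ⌊dot r w₃⌋ ∧ ⌊dot s w₄⌋ = ⌊dot r w₄⌋} ∩
      {s : ℝ × ℝ | ⌊dot s w₅⌋ = ⌊dot r w₅⌋ ∧ ⌊dot s w₆⌋ = ⌊dot r w₆⌋} ∩
      {s : ℝ × ℝ | ⌊dot s w₇⌋ = ⌊dot r w₇⌋ ∧ ⌊dot s w₈⌋ = ⌊dot r w₈⌋} := by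
    ext s
    simp only [Set.mem_inter_iff, Set.mem_setOf_eq, hchar s]
    tauto
  refine ⟨_, _, _, _, hsq1, hsq2, hsq3, hsq4, hset, ?_⟩
  rw [hset]
  exact (((sq_convex hsq1).inter (sq_convex hsq2)).inter (sq_convex hsq3)).inter (sq_convex hsq4)
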